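/- For every α ∈ A₁ and all f, g ∈ F[x], F_α(f·g) = f(x)·F_α(g) + F_α(f)·g(x) (i.e., F_α is a derivation along the embedding F[x] → A₁). Moreover, if α ∈ A_h, then for every f ∈ F[x] there exists b ∈ A_h with F_α(f) = f'(x)·α + (xb − bx), where f' is the formal derivative of f. -/

import Mathlib

open Polynomial TensorProduct
open scoped Classical

noncomputable section

/-- The single defining relation `Y·X = X·Y + 1` of the Weyl algebra. -/
inductive WeylRel (F : Type) [Field F] :
    FreeAlgebra F (Fin 2) → FreeAlgebra F (Fin 2) → Prop
  | rel : WeylRel F (FreeAlgebra.ι F (1 : Fin 2) * FreeAlgebra.ι F (0 : Fin 2))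
      (FreeAlgebra.ι F (0 : Fin 2) * FreeAlgebra.ι F (1 : Fin 2) + 1)

/-- The first Weyl algebra `A₁` over `F`. -/
abbrev Weyl (F : Type) [Field F] : Type := RingQuot (WeylRel F)

variable (F : Type) [Field F]

/-- The image `x` of the generator `X` in the Weyl algebra. -/
def wx : Weyl F := RingQuot.mkAlgHom F (WeylRel F) (FreeAlgebra.ι F (0 : Fin 2))

/-- The image `y` of the generator `Y` in the Weyl algebra. -/
def wy : Weyl F := RingQuot.mkAlgHom F (WeylRel F) (FreeAlgebra.ι F (1 : Fin 2))

/-- The subalgebra `A_h ⊆ A₁` generated by `x` and `ŷ = y·h(x)`. -/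
def Ah (h : F[X]) : Subalgebra F (Weyl F) :=
  Algebra.adjoin F {wx F, wy F * aeval (wx F) h}

/-- The monic greatest common divisor of two polynomials over a field. -/
def mgcd (f g : F[X]) : F[X] := normalize (EuclideanDomain.gcd f g)

/-- the map `F_α` (the `F`-linear map with
`F_α(x^s) = Σ_{ℓ<s} x^ℓ·α·x^{s−1−ℓ}`) is a derivation along `F[x] → A₁`, and for
`α ∈ A_h`, `F_α(f) ≡ f'(x)·α` modulo `[x, A_h]`. -/
theorem statement3 (h : F[X]) (hh : h ≠ 0) (α : Weyl F) (Fα : F[X] →ₗ[F] Weyl F)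
    (hFα : ∀ s : ℕ, Fα (X ^ s) =
      ∑ ℓ ∈ Finset.range s, wx F ^ ℓ * α * wx F ^ (s - 1 - ℓ)) :
    (∀ f g : F[X], Fα (f * g) = aeval (wx F) f * Fα g + Fα f * aeval (wx F) g) ∧
    (α ∈ Ah F h → ∀ f : F[X], ∃ b ∈ Ah F h,
      Fα f = aeval (wx F) (derivative f) * α + (wx F * b - b * wx F)) := by
  have h1 : Fα 1 = 0 := by simpa using hFα 0
  have hx1 : Fα X = α := by simpa using hFα 1
  have hmono : ∀ s t : ℕ, Fα (X ^ s * X ^ t) =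
      wx F ^ s * Fα (X ^ t) + Fα (X ^ s) * wx F ^ t := by
    intro s t
    rw [← pow_add, hFα, hFα, hFα, Finset.sum_range_add, Finset.mul_sum, Finset.sum_mul,
      add_comm]
    congr 1
    · refine Finset.sum_congr rfl fun j hj => ?_
      rw [Finset.mem_range] at hj
      rw [show s + t - 1 - (s + j) = t - 1 - j by omega, pow_add]
      noncomm_ring
    · refine Finset.sum_congr rfl fun ℓ hℓ => ?_
      rw [Finset.mem_range] at hℓ
      rw [show s + t - 1 - ℓ = (s - 1 - ℓ) + t by omega, pow_add]
      noncomm_ring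
  have hder : ∀ f g : F[X], Fα (f * g) = aeval (wx F) f * Fα g + Fα f * aeval (wx F) g := by
    intro f g
    induction f using Polynomial.induction_on' with
    | add p q hp hq => simp only [add_mul, map_add, hp, hq]; abel
    | monomial n a =>
      induction g using Polynomial.induction_on' with
      | add p q hp hq => simp only [mul_add, map_add, hp, hq]; abel
      | monomial m b =>
        simp only [← smul_X_eq_monomial, smul_mul_smul_comm, map_smul, hmono n m, map_pow,
          aeval_X, smul_add, smul_mul_assoc, mul_smul_comm, smul_smul, mul_comm b a]
  refine ⟨hder, fun hα f => ?_⟩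
  have hxmem : wx F ∈ Ah F h := Algebra.subset_adjoin (by simp)
  have hpow : ∀ n : ℕ, ∃ b ∈ Ah F h,
      Fα (X ^ (n + 1)) = ((n : F) + 1) • (wx F ^ n * α) + (wx F * b - b * wx F) := by
    intro n
    induction n with
    | zero => exact ⟨0, zero_mem _, by simp [hx1]⟩
    | succ n ih =>
      obtain ⟨b, hb, hFb⟩ := ih
      refine ⟨b * wx F - ((n : F) + 1) • (wx F ^ n * α), ?_, ?_⟩
      · exact sub_mem (mul_mem hb hxmem)
          (Subalgebra.smul_mem _ (mul_mem (pow_mem hxmem n) hα) _)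
      · have key := hder (X ^ (n + 1)) X
        rw [← pow_succ, hx1, aeval_X, aeval_X_pow, hFb] at key
        rw [key]
        push_cast
        simp only [pow_succ, mul_sub, sub_mul, add_mul, mul_add, smul_mul_assoc,
          mul_smul_comm, mul_assoc, add_smul, one_smul]
        rw [show wx F * (wx F ^ n * α) = wx F ^ n * (wx F * α) by
          rw [← mul_assoc, ← pow_succ', pow_succ, mul_assoc]]
        abel
  induction f using Polynomial.induction_on' with
  | add p q hp hq =>
    obtain ⟨b1, hb1, e1⟩ := hp
    obtain ⟨b2, hb2, e2⟩ := hq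
    refine ⟨b1 + b2, add_mem hb1 hb2, ?_⟩
    rw [map_add, e1, e2, derivative_add, map_add]
    noncomm_ring
  | monomial n a =>
    cases n with
    | zero =>
      refine ⟨0, zero_mem _, ?_⟩
      rw [← smul_X_eq_monomial, map_smul]
      simp [h1]
    | succ m =>
      obtain ⟨b, hb, e⟩ := hpow m
      refine ⟨a • b, Subalgebra.smul_mem _ hb _, ?_⟩
      rw [← smul_X_eq_monomial, map_smul, e, derivative_smul, derivative_X_pow,
        Nat.add_sub_cancel, map_smul, map_mul, aeval_C, map_pow, aeval_X]
      rw [smul_mul_assoc, mul_assoc, ← Algebra.smul_def]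
      simp only [smul_add, smul_sub, smul_smul, smul_mul_assoc, mul_smul_comm,
        Nat.cast_add, Nat.cast_one]
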